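/- For every g in H¹((ε, δ)) with 0 < ε small enough and fixed δ > 0, one has |g(ε)|² ≤ C |log ε| ( ∫_ε^δ x |g'(x)|² dx + ∫_{δ/2}^δ |g(x)|² dx ), where C depends only on δ and not on ε or g. -/

import Mathlib

open MeasureTheory

set_option maxHeartbeats 1000000

/-- 1D logarithmic trace estimate: for `g ∈ H¹((ε,δ))` (encoded via a derivative `g'`
with the relevant integrability), and `ε` small enough,
`|g(ε)|² ≤ C |log ε| (∫_ε^δ x |g'|² dx + ∫_{δ/2}^δ |g|² dx)` with `C` depending only on `δ`. -/
theorem one_dim_log_trace_estimate (δ : ℝ) (hδ : 0 < δ) :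
    ∃ C > 0, ∃ ε₀ > 0, ∀ ε : ℝ, 0 < ε → ε < ε₀ →
      ∀ g g' : ℝ → ℝ,
        (∀ x ∈ Set.Icc ε δ, HasDerivAt g (g' x) x) →
        IntervalIntegrable (fun x => x * (g' x) ^ 2) volume ε δ →
        IntervalIntegrable (fun x => (g x) ^ 2) volume (δ / 2) δ →
        (g ε) ^ 2 ≤ C * |Real.log ε| *
          ((∫ x in ε..δ, x * (g' x) ^ 2) + ∫ x in (δ / 2)..δ, (g x) ^ 2) := by
  set M : ℝ := 1 + max (Real.log δ) 0 with hM
  have hM1 : (1:ℝ) ≤ M := le_add_of_nonneg_right (le_max_right _ _)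
  refine ⟨2 * M + 4 / δ, by positivity, min (δ/2) (Real.exp (-1)), by positivity,
    fun ε hε hε₀ g g' hderiv hA hB => ?_⟩
  have hεδ2 : ε < δ/2 := lt_of_lt_of_le hε₀ (min_le_left _ _)
  have hεe : ε < Real.exp (-1) := lt_of_lt_of_le hε₀ (min_le_right _ _)
  have hε1 : ε < 1 := hεe.trans (by
    have := Real.exp_lt_exp.2 (show (-1:ℝ) < 0 by norm_num)
    simpa using this)
  have hεδ : ε < δ := hεδ2.trans (by linarith)
  have hlog1 : 1 ≤ |Real.log ε| := by
    have h1 : Real.log ε ≤ -1 := by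
      have := Real.log_le_log hε (le_of_lt hεe)
      simpa [Real.log_exp] using this
    rw [abs_of_nonpos (by linarith)]; linarith
  have hlogpos : 0 < |Real.log ε| := lt_of_lt_of_le one_pos hlog1
  -- continuity of g on [ε, δ]
  have hgc : ContinuousOn g (Set.Icc ε δ) := fun x hx => ((hderiv x hx).continuousAt).continuousWithinAt
  have hsub : Set.Icc (δ/2) δ ⊆ Set.Icc ε δ := Set.Icc_subset_Icc (le_of_lt hεδ2) le_rfl
  -- min point y₀
  obtain ⟨y₀, hy₀mem, hy₀min⟩ := isCompact_Icc.exists_isMinOn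
    (Set.nonempty_Icc.2 (by linarith)) (((hgc.mono hsub).pow 2) : ContinuousOn (fun y => (g y)^2) _)
  have hy₀1 : δ/2 ≤ y₀ := hy₀mem.1
  have hy₀2 : y₀ ≤ δ := hy₀mem.2
  have hεy₀ : ε ≤ y₀ := le_of_lt (lt_of_lt_of_le hεδ2 hy₀1)
  -- notation
  set A : ℝ := ∫ x in ε..δ, x * (g' x) ^ 2 with hAdef
  set B : ℝ := ∫ x in (δ/2)..δ, (g x) ^ 2 with hBdef
  set A' : ℝ := ∫ x in ε..y₀, x * (g' x) ^ 2 with hA'def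
  -- nonnegativity of integrals
  have hAnn : 0 ≤ A := intervalIntegral.integral_nonneg (le_of_lt hεδ)
    (fun x hx => mul_nonneg (le_trans hε.le hx.1) (sq_nonneg _))
  have hBnn : 0 ≤ B := intervalIntegral.integral_nonneg (by linarith)
    (fun x hx => by positivity)
  have hA'int : IntervalIntegrable (fun x => x * (g' x) ^ 2) volume ε y₀ :=
    hA.mono_set (Set.uIcc_subset_uIcc_iff_le.2 ⟨by simp [min_le_min, hεδ.le, hεy₀], by
      simp [max_le_max, hεδ.le, hεy₀, hy₀2]⟩)
  have hA'nn : 0 ≤ A' := intervalIntegral.integral_nonneg hεy₀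
    (fun x hx => mul_nonneg (le_trans hε.le hx.1) (sq_nonneg _))
  have hA'A : A' ≤ A := by
    have hsplit : A = A' + ∫ x in y₀..δ, x * (g' x) ^ 2 := by
      rw [hAdef, hA'def, intervalIntegral.integral_add_adjacent_intervals hA'int
        (hA.mono_set (Set.uIcc_subset_uIcc_iff_le.2 ⟨by simp [hεy₀, hεδ.le], by simp [hy₀2, hεδ.le]⟩))]
    have h2 : 0 ≤ ∫ x in y₀..δ, x * (g' x) ^ 2 := intervalIntegral.integral_nonneg hy₀2
      (fun x hx => mul_nonneg (le_trans (le_trans (by linarith : (0:ℝ) ≤ δ/2) hy₀1) hx.1) (sq_nonneg _))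
    linarith
  -- min value bound: (g y₀)^2 * (δ/2) ≤ B
  have hmin : (g y₀)^2 * (δ/2) ≤ B := by
    have hmono : ∫ x in (δ/2)..δ, (g y₀)^2 ≤ B :=
      intervalIntegral.integral_mono_on (by linarith) intervalIntegrable_const hB
        (fun x hx => hy₀min hx)
    rw [intervalIntegral.integral_const, smul_eq_mul] at hmono
    linarith
  -- integrability of g' on [ε, δ]
  have hg'int : IntervalIntegrable g' volume ε δ := by
    rw [intervalIntegrable_iff_integrableOn_Ioc_of_le hεδ.le]
    have hmeas : AEStronglyMeasurable g' (volume.restrict (Set.Ioc ε δ)) := by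
      apply (measurable_deriv g).aestronglyMeasurable.congr
      filter_upwards [ae_restrict_mem measurableSet_Ioc] with x hx
      exact (hderiv x ⟨hx.1.le, hx.2⟩).deriv
    have hbound : IntegrableOn (fun x => (ε⁻¹ + x * (g' x)^2) / 2) (Set.Ioc ε δ) volume := by
      apply Integrable.div_const
      exact (integrableOn_const measure_Ioc_lt_top.ne).add
        ((intervalIntegrable_iff_integrableOn_Ioc_of_le hεδ.le).1 hA)
    refine Integrable.mono' hbound hmeas ?_
    filter_upwards [ae_restrict_mem measurableSet_Ioc] with x hx
    have hx0 : 0 < x := hε.trans hx.1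
    have h1 : 2 * x * |g' x| ≤ 1 + x ^ 2 * (g' x) ^ 2 := by
      nlinarith [sq_nonneg (x * |g' x| - 1), sq_abs (g' x)]
    have hxne : x ≠ 0 := ne_of_gt hx0
    have key : 2 * |g' x| ≤ x⁻¹ + x * (g' x)^2 := by
      have h2 := mul_le_mul_of_nonneg_left h1 (inv_pos.2 hx0).le
      calc 2 * |g' x| = x⁻¹ * (2 * x * |g' x|) := by field_simp
        _ ≤ x⁻¹ * (1 + x ^ 2 * (g' x) ^ 2) := h2
        _ = x⁻¹ + x * (g' x)^2 := by field_simp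
    have hxε : x⁻¹ ≤ ε⁻¹ := inv_anti₀ hε hx.1.le
    rw [Real.norm_eq_abs]
    linarith
  have hg'inty : IntervalIntegrable g' volume ε y₀ :=
    hg'int.mono_set (Set.uIcc_subset_uIcc_iff_le.2 ⟨by simp [hεδ.le, hεy₀], by simp [hεδ.le, hεy₀, hy₀2]⟩)
  -- FTC
  have hFTC : ∫ x in ε..y₀, g' x = g y₀ - g ε := by
    apply intervalIntegral.integral_eq_sub_of_hasDerivAt
    · intro x hx
      rw [Set.uIcc_of_le hεy₀] at hx
      exact hderiv x ⟨hx.1, hx.2.trans hy₀2⟩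
    · exact hg'inty
  -- log integral
  set L : ℝ := Real.log y₀ - Real.log ε with hLdef
  have hy₀pos : 0 < y₀ := lt_of_lt_of_le (by linarith) hy₀1
  have hLpos : 0 < L := sub_pos.2 (Real.log_lt_log hε (lt_of_lt_of_le hεδ2 hy₀1))
  have hinvint : IntervalIntegrable (fun x => x⁻¹) volume ε y₀ :=
    intervalIntegral.intervalIntegrable_inv (fun x hx => by
      rw [Set.uIcc_of_le hεy₀] at hx; exact ne_of_gt (hε.trans_le hx.1)) continuousOn_id
  have hLint : ∫ x in ε..y₀, x⁻¹ = L := by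
    rw [integral_inv_of_pos hε hy₀pos, Real.log_div (ne_of_gt hy₀pos) (ne_of_gt hε)]
  -- key estimate: T := ∫ |g'| satisfies T ≤ (s L + A'/s)/2 for all s > 0
  set T : ℝ := ∫ x in ε..y₀, |g' x| with hTdef
  have hTnn : 0 ≤ T := intervalIntegral.integral_nonneg hεy₀ (fun x _ => abs_nonneg _)
  have hTbound : ∀ s : ℝ, 0 < s → T ≤ (s * L + A' / s) / 2 := by
    intro s hs
    have hrhsint : IntervalIntegrable (fun x => (s * x⁻¹ + x * (g' x)^2 / s) / 2) volume ε y₀ := by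
      apply IntervalIntegrable.div_const
      exact (hinvint.const_mul s).add (hA'int.div_const s)
    have hmono : T ≤ ∫ x in ε..y₀, (s * x⁻¹ + x * (g' x)^2 / s) / 2 := by
      apply intervalIntegral.integral_mono_on hεy₀ hg'inty.abs hrhsint
      intro x hx
      have hx0 : 0 < x := hε.trans_le hx.1
      have h1 : 2 * (x * s) * |g' x| ≤ s ^ 2 + x ^ 2 * (g' x) ^ 2 := by
        nlinarith [sq_nonneg (x * |g' x| - s), sq_abs (g' x)]
      have hxne : x ≠ 0 := ne_of_gt hx0
      have hsne : s ≠ 0 := ne_of_gt hs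
      have key2 : 2 * |g' x| ≤ s * x⁻¹ + x * (g' x)^2 / s := by
        calc 2 * |g' x| = (x * s)⁻¹ * (2 * (x * s) * |g' x|) := by field_simp
          _ ≤ (x * s)⁻¹ * (s ^ 2 + x ^ 2 * (g' x) ^ 2) :=
              mul_le_mul_of_nonneg_left h1 (by positivity)
          _ = s * x⁻¹ + x * (g' x)^2 / s := by field_simp
      linarith
    calc T ≤ ∫ x in ε..y₀, (s * x⁻¹ + x * (g' x)^2 / s) / 2 := hmono
      _ = ((∫ x in ε..y₀, s * x⁻¹) + ∫ x in ε..y₀, x * (g' x)^2 / s) / 2 := by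
          rw [intervalIntegral.integral_div, intervalIntegral.integral_add (hinvint.const_mul s) (hA'int.div_const s)]
      _ = (s * L + A' / s) / 2 := by
          rw [intervalIntegral.integral_const_mul, hLint, intervalIntegral.integral_div]
  -- T^2 ≤ L * A'
  have hT2 : T ^ 2 ≤ L * A' := by
    rcases eq_or_lt_of_le hA'nn with hA'0 | hA'pos
    · have hT0 : T ≤ 0 := by
        refine le_of_forall_pos_le_add (fun t ht => ?_)
        have := hTbound (2 * t / L) (by positivity)
        rw [← hA'0] at this
        have : T ≤ (2 * t / L * L) / 2 := by simpa using this
        rw [div_mul_cancel₀ _ (ne_of_gt hLpos)] at this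
        linarith
      have : T = 0 := le_antisymm hT0 hTnn
      rw [this, ← hA'0]; ring_nf; positivity
    · set s := Real.sqrt (A' / L) with hs
      have hspos : 0 < s := Real.sqrt_pos.2 (div_pos hA'pos hLpos)
      have hbd := hTbound s hspos
      have hs2 : s ^ 2 = A' / L := Real.sq_sqrt (le_of_lt (div_pos hA'pos hLpos))
      have hsL : s * L + A' / s = 2 * Real.sqrt (L * A') := by
        have h1 : s * L = Real.sqrt (L * A') := by
          rw [hs, ← Real.sqrt_sq hLpos.le, ← Real.sqrt_mul (by positivity)]
          congr 1
          rw [Real.sqrt_sq hLpos.le, div_mul_eq_mul_div, div_eq_iff hLpos.ne']; ring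
        have hs2' : s ^ 2 * L = A' := by rw [hs2]; field_simp
        have h2 : A' / s = Real.sqrt (L * A') := by
          rw [div_eq_iff (ne_of_gt hspos), ← h1]
          nlinarith [hs2']
        rw [h1, h2]; ring
      rw [hsL] at hbd
      have hT' : T ≤ Real.sqrt (L * A') := by linarith
      calc T ^ 2 ≤ Real.sqrt (L * A') ^ 2 := pow_le_pow_left₀ hTnn hT' 2
        _ = L * A' := Real.sq_sqrt (mul_nonneg hLpos.le hA'nn)
  -- combine
  have hgε : g ε = g y₀ - ∫ x in ε..y₀, g' x := by rw [hFTC]; ring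
  have habs : |∫ x in ε..y₀, g' x| ≤ T :=
    (intervalIntegral.abs_integral_le_integral_abs hεy₀)
  have hsq : (∫ x in ε..y₀, g' x) ^ 2 ≤ L * A' := by
    calc (∫ x in ε..y₀, g' x) ^ 2 = |∫ x in ε..y₀, g' x| ^ 2 := (sq_abs _).symm
      _ ≤ T ^ 2 := pow_le_pow_left₀ (abs_nonneg _) habs 2
      _ ≤ L * A' := hT2
  have hmain : (g ε) ^ 2 ≤ 2 * (g y₀)^2 + 2 * (L * A') := by
    rw [hgε]
    nlinarith [sq_nonneg (g y₀ + ∫ x in ε..y₀, g' x), hsq]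
  -- L ≤ M * |log ε|
  have hLbound : L ≤ M * |Real.log ε| := by
    have h1 : Real.log y₀ ≤ max (Real.log δ) 0 := le_max_of_le_left (Real.log_le_log hy₀pos hy₀2)
    have h2 : -Real.log ε = |Real.log ε| := by
      rw [abs_of_nonpos (Real.log_nonpos hε.le hε1.le)]
    have h3 : max (Real.log δ) 0 ≤ max (Real.log δ) 0 * |Real.log ε| := by
      nlinarith [le_max_right (Real.log δ) 0, hlog1]
    rw [hLdef, hM]
    nlinarith [le_max_right (Real.log δ) 0]
  have hMnn : (0:ℝ) ≤ M := by linarith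
  have hgy₀ : 2 * (g y₀)^2 ≤ (4/δ) * B := by
    rw [div_mul_eq_mul_div, le_div_iff₀ hδ]
    nlinarith [hmin]
  clear_value M L A B A' T
  calc (g ε) ^ 2 ≤ 2 * (g y₀)^2 + 2 * (L * A') := hmain
    _ ≤ (4/δ) * B + 2 * (M * |Real.log ε|) * A := by
        have hkey : L * A' ≤ (M * |Real.log ε|) * A :=
          mul_le_mul hLbound hA'A hA'nn (mul_nonneg hMnn hlogpos.le)
        linarith
    _ ≤ (4/δ) * |Real.log ε| * B + 2 * M * |Real.log ε| * A := by
        nlinarith [mul_le_mul_of_nonneg_right hlog1 hBnn]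
    _ ≤ (2 * M + 4 / δ) * |Real.log ε| * (A + B) := by
        nlinarith [mul_nonneg (mul_nonneg (by linarith : (0:ℝ) ≤ 2*M) hlogpos.le) hBnn,
          mul_nonneg (mul_nonneg (by positivity : (0:ℝ) ≤ 4/δ) hlogpos.le) hAnn]
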